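/- Let W : (0,1) → [0,∞) be Borel measurable with ∫_U W = ∞ for every nonempty open U ⊆ (0,1). Let (T''(t)) be the right translation semigroup on L_p(0,1) (with functions extended by 0), and for n ∈ ℕ let T''_{W∧n}(t)f(x) = exp(−∫_{x−t}^x (W∧n)(s) ds) f(x−t). Then for every t > 0 and f ∈ L_p(0,1), the strong limit lim_{n→∞} T''_{W∧n}(t)f = 0. -/

import Mathlib

open MeasureTheory Set ENNReal Filter Topology

/-- Let `W : (0,1) → [0,∞)` be Borel measurable with `∫_U W = ∞` for every nonempty open
`U ⊆ (0,1)`. Then for every `t > 0` and `f ∈ L_p(0,1)` (extended by `0` outside `(0,1)`),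
the functions `T''_{W∧n}(t)f : x ↦ exp(−∫_{x−t}^x (W∧n)) f(x−t)` tend to `0` in
`L_p(0,1)` as `n → ∞`. -/
theorem absorption_translation_tendsto_zero (p : ℝ≥0∞) (hp : 1 ≤ p) (hp' : p ≠ ∞)
    (W : ℝ → ℝ) (hWmeas : Measurable W) (hWpos : ∀ x, 0 ≤ W x)
    (hWsing : ∀ U : Set ℝ, IsOpen U → U.Nonempty → U ⊆ Set.Ioo 0 1 →
      ∫⁻ x in U, ENNReal.ofReal (W x) = ∞)
    (t : ℝ) (ht : 0 < t) (f : ℝ → ℝ)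
    (hf : MemLp f p (volume.restrict (Set.Ioo 0 1)))
    (hf0 : ∀ x, x ∉ Set.Ioo (0:ℝ) 1 → f x = 0) :
    Tendsto
      (fun n : ℕ => eLpNorm
        (fun x => Real.exp (-∫ s in Set.Ioc (x - t) x, min (W s) (n : ℝ)) * f (x - t))
        p (volume.restrict (Set.Ioo 0 1)))
      atTop (nhds 0) := by
  have hp0 : p ≠ 0 := by
    intro h; rw [h] at hp; simp at hp
  set q : ℝ := p.toReal with hqdef
  have hq : 0 < q := ENNReal.toReal_pos hp0 hp'
  set μ : Measure ℝ := volume.restrict (Set.Ioo 0 1) with hμ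
  -- the sequence of functions
  set g : ℕ → ℝ → ℝ := fun n x =>
    Real.exp (-∫ s in Set.Ioc (x - t) x, min (W s) (n : ℝ)) * f (x - t) with hg
  -- global a.e. measurability of f
  have hfae : AEMeasurable f volume := by
    have hind : f = (Set.Ioo (0:ℝ) 1).indicator f := by
      ext x
      by_cases hx : x ∈ Set.Ioo (0:ℝ) 1
      · simp [Set.indicator_of_mem hx]
      · simp [Set.indicator_of_notMem hx, hf0 x hx]
    rw [hind]
    exact (aemeasurable_indicator_iff measurableSet_Ioo).2 hf.1.aemeasurable
  have htrans : MeasurePreserving (fun x : ℝ => x - t) volume volume :=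
    measurePreserving_sub_right volume t
  have hfT : AEMeasurable (fun x : ℝ => f (x - t)) volume := by
    have := hfae.comp_quasiMeasurePreserving htrans.quasiMeasurePreserving
    exact this
  -- nonnegativity of each damping integral
  have hmin_nonneg : ∀ (n : ℕ) (s : ℝ), 0 ≤ min (W s) (n : ℝ) :=
    fun n s => le_min (hWpos s) (Nat.cast_nonneg n)
  have hint_nonneg : ∀ (n : ℕ) (x : ℝ),
      0 ≤ ∫ s in Set.Ioc (x - t) x, min (W s) (n : ℝ) := by
    intro n x
    exact setIntegral_nonneg measurableSet_Ioc fun s _ => hmin_nonneg n s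
  -- interval integrability of the truncations
  have hII : ∀ (n : ℕ) (a b : ℝ),
      IntervalIntegrable (fun s => min (W s) (n : ℝ)) volume a b := by
    intro n a b
    rw [intervalIntegrable_iff]
    apply Measure.integrableOn_of_bounded (M := (n : ℝ))
    · exact measure_Ioc_lt_top.ne
    · exact ((hWmeas.min measurable_const)).aestronglyMeasurable
    · refine Filter.Eventually.of_forall (fun s => ?_)
      rw [Real.norm_eq_abs, abs_of_nonneg (hmin_nonneg n s)]
      exact min_le_right _ _
  -- continuity of the exponent
  have hcont : ∀ n : ℕ, Continuous fun x : ℝ =>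
      ∫ s in Set.Ioc (x - t) x, min (W s) (n : ℝ) := by
    intro n
    have hc1 : Continuous fun x : ℝ => ∫ s in (0:ℝ)..x, min (W s) (n : ℝ) :=
      intervalIntegral.continuous_primitive (hII n) 0
    have hc : Continuous fun x : ℝ =>
        (∫ s in (0:ℝ)..x, min (W s) (n : ℝ)) - ∫ s in (0:ℝ)..(x - t), min (W s) (n : ℝ) :=
      hc1.sub (hc1.comp (continuous_id.sub continuous_const))
    convert hc using 1
    ext x
    rw [intervalIntegral.integral_interval_sub_left (hII n 0 x) (hII n 0 (x - t)),
      intervalIntegral.integral_of_le (by linarith : x - t ≤ x)]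
  -- a.e. strong measurability of g n
  have hgmeas : ∀ n : ℕ, AEStronglyMeasurable (g n) μ := by
    intro n
    apply AEStronglyMeasurable.mul
    · exact (((hcont n).neg.rexp)).aestronglyMeasurable
    · exact (hfT.mono_measure Measure.restrict_le_self).aestronglyMeasurable
  -- the dominating function
  set bound : ℝ → ℝ≥0∞ := fun x => (‖f (x - t)‖₊ : ℝ≥0∞) ^ q with hbound
  have h_bound : ∀ n : ℕ, (fun x => (‖g n x‖₊ : ℝ≥0∞) ^ q) ≤ᵐ[μ] bound := by
    intro n
    refine Filter.Eventually.of_forall fun x => ?_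
    apply ENNReal.rpow_le_rpow _ hq.le
    rw [ENNReal.coe_le_coe]
    have : ‖g n x‖ ≤ ‖f (x - t)‖ := by
      rw [hg]
      simp only [norm_mul]
      calc ‖Real.exp (-∫ s in Set.Ioc (x - t) x, min (W s) (n : ℝ))‖ * ‖f (x - t)‖
          ≤ 1 * ‖f (x - t)‖ := by
            apply mul_le_mul_of_nonneg_right _ (norm_nonneg _)
            rw [Real.norm_eq_abs, abs_of_nonneg (Real.exp_nonneg _)]
            exact Real.exp_le_one_iff.2 (neg_nonpos.2 (hint_nonneg n x))
        _ = ‖f (x - t)‖ := one_mul _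
    exact this
  -- finiteness of the bound's integral
  have h_fin : ∫⁻ x, bound x ∂μ ≠ ∞ := by
    have h1 : ∫⁻ x, bound x ∂μ ≤ ∫⁻ x, bound x ∂volume :=
      lintegral_mono' Measure.restrict_le_self le_rfl
    have h2 : ∫⁻ x, bound x ∂volume = ∫⁻ y, (‖f y‖₊ : ℝ≥0∞) ^ q ∂volume := by
      rw [hbound]
      have := lintegral_map' (f := fun y => (‖f y‖₊ : ℝ≥0∞) ^ q)
        (g := fun x : ℝ => x - t) (μ := volume) ?_ htrans.measurable.aemeasurable
      · rw [htrans.map_eq] at this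
        exact this.symm
      · rw [htrans.map_eq]
        exact (hfae.enorm.pow_const q)
    have h3 : ∫⁻ y, (‖f y‖₊ : ℝ≥0∞) ^ q ∂volume
        = ∫⁻ y in Set.Ioo (0:ℝ) 1, (‖f y‖₊ : ℝ≥0∞) ^ q ∂volume := by
      symm
      apply setLIntegral_eq_of_support_subset
      intro y hy
      by_contra hys
      apply hy
      simp only [Function.mem_support] at *
      rw [hf0 y hys]
      simp [ENNReal.zero_rpow_of_pos hq]
    have h4 : ∫⁻ y in Set.Ioo (0:ℝ) 1, (‖f y‖₊ : ℝ≥0∞) ^ q ∂volume < ∞ :=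
      lintegral_rpow_enorm_lt_top_of_eLpNorm_lt_top hp0 hp' hf.2
    exact (h1.trans_lt (by rw [h2, h3]; exact h4)).ne
  -- pointwise a.e. convergence to 0
  have h_lim : ∀ᵐ x ∂μ, Tendsto (fun n : ℕ => (‖g n x‖₊ : ℝ≥0∞) ^ q) atTop (𝓝 0) := by
    filter_upwards [ae_restrict_mem measurableSet_Ioo] with x hx
    have hgx : Tendsto (fun n : ℕ => g n x) atTop (𝓝 0) := by
      by_cases hfx : f (x - t) = 0
      · have hz : ∀ n : ℕ, g n x = 0 := fun n => by rw [hg]; simp [hfx]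
        simp [hz]
      · have hxt : x - t ∈ Set.Ioo (0:ℝ) 1 := by
          by_contra h; exact hfx (hf0 _ h)
        -- the lintegrals of the truncations
        set I : ℕ → ℝ≥0∞ := fun n =>
          ∫⁻ s in Set.Ioc (x - t) x, ENNReal.ofReal (min (W s) (n : ℝ)) with hI
        have hImono : Monotone I := by
          intro m n hmn
          refine lintegral_mono fun s => ENNReal.ofReal_le_ofReal ?_
          exact min_le_min le_rfl (Nat.cast_le.2 hmn)
        have hIsup : (⨆ n, I n) = ∫⁻ s in Set.Ioc (x - t) x, ENNReal.ofReal (W s) := by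
          rw [hI, ← lintegral_iSup (fun n => (hWmeas.min measurable_const).ennreal_ofReal)
            (fun m n hmn s => ENNReal.ofReal_le_ofReal (min_le_min le_rfl (Nat.cast_le.2 hmn)))]
          refine lintegral_congr fun s => ?_
          refine le_antisymm (iSup_le fun n => ENNReal.ofReal_le_ofReal (min_le_left _ _)) ?_
          refine le_iSup_of_le ⌈W s⌉₊ ?_
          rw [min_eq_left (Nat.le_ceil _)]
        have hItop : (⨆ n, I n) = ∞ := by
          rw [hIsup, eq_top_iff]
          have hU : ∫⁻ s in Set.Ioo (x - t) x, ENNReal.ofReal (W s) = ∞ := by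
            refine hWsing _ isOpen_Ioo (Set.nonempty_Ioo.2 (by linarith)) ?_
            intro y hy
            exact ⟨hxt.1.trans hy.1, hy.2.trans hx.2⟩
          calc (∞ : ℝ≥0∞) = ∫⁻ s in Set.Ioo (x - t) x, ENNReal.ofReal (W s) := hU.symm
            _ ≤ ∫⁻ s in Set.Ioc (x - t) x, ENNReal.ofReal (W s) :=
              lintegral_mono' (Measure.restrict_mono Set.Ioo_subset_Ioc_self le_rfl) le_rfl
        have hIfin : ∀ n : ℕ, I n ≠ ∞ := by
          intro n
          have : I n ≤ ∫⁻ _ in Set.Ioc (x - t) x, ENNReal.ofReal (n : ℝ) :=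
            lintegral_mono fun s => ENNReal.ofReal_le_ofReal (min_le_right _ _)
          rw [setLIntegral_const] at this
          exact (this.trans_lt (ENNReal.mul_lt_top ENNReal.ofReal_lt_top measure_Ioc_lt_top)).ne
        have hItend : Tendsto I atTop (𝓝 ∞) := by
          rw [← hItop]
          exact tendsto_atTop_iSup hImono
        have hr : ∀ n : ℕ,
            (∫ s in Set.Ioc (x - t) x, min (W s) (n : ℝ)) = (I n).toReal := by
          intro n
          rw [integral_eq_lintegral_of_nonneg_ae
            (Filter.Eventually.of_forall fun s => hmin_nonneg n s)
            (hWmeas.min measurable_const).aestronglyMeasurable]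
        have hrtend : Tendsto
            (fun n : ℕ => ∫ s in Set.Ioc (x - t) x, min (W s) (n : ℝ)) atTop atTop := by
          rw [tendsto_atTop]
          intro M
          filter_upwards [hItend.eventually (lt_mem_nhds (show ENNReal.ofReal M < ∞ from
            ENNReal.ofReal_lt_top))] with n hn
          rw [hr n]
          exact (ENNReal.ofReal_le_iff_le_toReal (hIfin n)).1 hn.le
        have hexp : Tendsto
            (fun n : ℕ => Real.exp (-∫ s in Set.Ioc (x - t) x, min (W s) (n : ℝ)))
            atTop (𝓝 0) :=
          Real.tendsto_exp_atBot.comp (tendsto_neg_atTop_atBot.comp hrtend)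
        have := hexp.mul_const (f (x - t))
        rw [zero_mul] at this
        exact this
    have h1 : Tendsto (fun n : ℕ => (‖g n x‖₊ : ℝ≥0∞)) atTop (𝓝 0) := by
      rw [show ((0:ℝ≥0∞)) = ((‖(0:ℝ)‖₊ : ℝ≥0∞)) by simp]
      exact (ENNReal.tendsto_coe.2 hgx.nnnorm)
    have h2 := (ENNReal.continuous_rpow_const (y := q)).tendsto 0 |>.comp h1
    rwa [ENNReal.zero_rpow_of_pos hq] at h2
  -- measurability of the integrands
  have hFmeas : ∀ n : ℕ, AEMeasurable (fun x => (‖g n x‖₊ : ℝ≥0∞) ^ q) μ :=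
    fun n => (hgmeas n).aemeasurable.enorm.pow_const q
  have hmain : Tendsto (fun n : ℕ => ∫⁻ x, (‖g n x‖₊ : ℝ≥0∞) ^ q ∂μ) atTop (𝓝 0) := by
    have := tendsto_lintegral_of_dominated_convergence' (μ := μ)
      (f := fun _ => (0:ℝ≥0∞)) bound hFmeas h_bound h_fin h_lim
    simpa using this
  have hfinal := (ENNReal.continuous_rpow_const (y := 1/q)).tendsto 0 |>.comp hmain
  rw [ENNReal.zero_rpow_of_pos (by positivity)] at hfinal
  have heq : ∀ n : ℕ, eLpNorm (g n) p μ = (∫⁻ x, (‖g n x‖₊ : ℝ≥0∞) ^ q ∂μ) ^ (1/q) :=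
    fun n => eLpNorm_eq_lintegral_rpow_enorm_toReal hp0 hp'
  exact hfinal.congr (fun n => (heq n).symm)
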